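/- For all p, q ∈ ℂ: if L and L′ are complex Lie algebras admitting bases realizing the bracket patterns d₅(p,q,0) and d₅(q,p,0) respectively, then L and L′ are isomorphic as Lie algebras over ℂ. -/

import Mathlib

/-- `Realizes L c` means that the complex Lie algebra `L` admits a basis `e₁, …, e₅`
(indexed by `Fin 5`) in which the brackets of basis vectors are given by the
structure constants `c`, i.e. `⁅eᵢ, eⱼ⁆ = ∑ₖ c i j k • eₖ` for all `i < j`,
all brackets of basis vectors being determined by these via antisymmetry. -/
def Realizes (L : Type) [LieRing L] [LieAlgebra ℂ L]
    (c : Fin 5 → Fin 5 → Fin 5 → ℂ) : Prop :=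
  ∃ e : Module.Basis (Fin 5) ℂ L, ∀ i j : Fin 5, i < j →
    ⁅e i, e j⁆ = ∑ k, c i j k • e k

/-- The bracket pattern `d₅(p,q,r)` (indices shifted down by one so the basis is indexed by `Fin 5`): `[e₂,e₄]=e₁+p·e₂`, `[e₃,e₄]=e₂+q·e₃`, `[e₁,e₅]=p(q−r)·e₁`, `[e₂,e₅]=(r−q)·e₁`, `[e₃,e₅]=e₁+r·e₂−r(p−q)·e₃`, all other brackets zero. -/
def d5 (p q r : ℂ) : Fin 5 → Fin 5 → Fin 5 → ℂ := fun i j =>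
  if i = 1 ∧ j = 3 then ![1, p, 0, 0, 0]
  else if i = 2 ∧ j = 3 then ![0, 1, q, 0, 0]
  else if i = 0 ∧ j = 4 then ![p * (q - r), 0, 0, 0, 0]
  else if i = 1 ∧ j = 4 then ![r - q, 0, 0, 0, 0]
  else if i = 2 ∧ j = 4 then ![1, r, -(r * (p - q)), 0, 0]
  else 0

set_option maxHeartbeats 1600000 in
/-- For all `p, q ∈ ℂ`, Lie algebras realizing the patterns `d₅(p,q,0)`
and `d₅(q,p,0)` are isomorphic. -/
theorem d5_r_zero_symmetry (p q : ℂ)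
    (L L' : Type) [LieRing L] [LieAlgebra ℂ L] [LieRing L'] [LieAlgebra ℂ L']
    (hL : Realizes L (d5 p q 0)) (hL' : Realizes L' (d5 q p 0)) :
    Nonempty (L ≃ₗ⁅ℂ⁆ L') := by
  obtain ⟨e, he⟩ := hL
  obtain ⟨f, hf⟩ := hL'
  have he13 : ⁅e 1, e 3⁆ = e 0 + p • e 1 := by
    rw [he 1 3 (by decide)]; simp [d5, Fin.sum_univ_five]
  have he23 : ⁅e 2, e 3⁆ = e 1 + q • e 2 := by
    rw [he 2 3 (by decide)]; simp [d5, Fin.sum_univ_five]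
  have he04 : ⁅e 0, e 4⁆ = (p * q) • e 0 := by
    rw [he 0 4 (by decide)]; simp [d5, Fin.sum_univ_five]
  have he14 : ⁅e 1, e 4⁆ = (-q) • e 0 := by
    rw [he 1 4 (by decide)]; simp [d5, Fin.sum_univ_five]
  have he24 : ⁅e 2, e 4⁆ = e 0 := by
    rw [he 2 4 (by decide)]; simp [d5, Fin.sum_univ_five]
  have he01 : ⁅e 0, e 1⁆ = 0 := by rw [he 0 1 (by decide)]; simp [d5, Fin.sum_univ_five]
  have he02 : ⁅e 0, e 2⁆ = 0 := by rw [he 0 2 (by decide)]; simp [d5, Fin.sum_univ_five]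
  have he03 : ⁅e 0, e 3⁆ = 0 := by rw [he 0 3 (by decide)]; simp [d5, Fin.sum_univ_five]
  have he12 : ⁅e 1, e 2⁆ = 0 := by rw [he 1 2 (by decide)]; simp [d5, Fin.sum_univ_five]
  have he34 : ⁅e 3, e 4⁆ = 0 := by rw [he 3 4 (by decide)]; simp [d5, Fin.sum_univ_five]
  have hf13 : ⁅f 1, f 3⁆ = f 0 + q • f 1 := by
    rw [hf 1 3 (by decide)]; simp [d5, Fin.sum_univ_five]
  have hf23 : ⁅f 2, f 3⁆ = f 1 + p • f 2 := by
    rw [hf 2 3 (by decide)]; simp [d5, Fin.sum_univ_five]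
  have hf04 : ⁅f 0, f 4⁆ = (q * p) • f 0 := by
    rw [hf 0 4 (by decide)]; simp [d5, Fin.sum_univ_five]
  have hf14 : ⁅f 1, f 4⁆ = (-p) • f 0 := by
    rw [hf 1 4 (by decide)]; simp [d5, Fin.sum_univ_five]
  have hf24 : ⁅f 2, f 4⁆ = f 0 := by
    rw [hf 2 4 (by decide)]; simp [d5, Fin.sum_univ_five]
  have hf01 : ⁅f 0, f 1⁆ = 0 := by rw [hf 0 1 (by decide)]; simp [d5, Fin.sum_univ_five]
  have hf02 : ⁅f 0, f 2⁆ = 0 := by rw [hf 0 2 (by decide)]; simp [d5, Fin.sum_univ_five]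
  have hf03 : ⁅f 0, f 3⁆ = 0 := by rw [hf 0 3 (by decide)]; simp [d5, Fin.sum_univ_five]
  have hf12 : ⁅f 1, f 2⁆ = 0 := by rw [hf 1 2 (by decide)]; simp [d5, Fin.sum_univ_five]
  have hf34 : ⁅f 3, f 4⁆ = 0 := by rw [hf 3 4 (by decide)]; simp [d5, Fin.sum_univ_five]
  obtain ⟨T, hTv⟩ : ∃ T : L →ₗ[ℂ] L',
      ∀ i, T (e i) = ![f 0, f 1 + (p - q) • f 2, f 2, f 3, f 4] i :=
    ⟨Module.Basis.constr e ℂ _, fun i => e.constr_basis ℂ _ i⟩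
  obtain ⟨T', hT'v⟩ : ∃ T' : L' →ₗ[ℂ] L,
      ∀ i, T' (f i) = ![e 0, e 1 + (q - p) • e 2, e 2, e 3, e 4] i :=
    ⟨Module.Basis.constr f ℂ _, fun i => f.constr_basis ℂ _ i⟩
  have hT0 : T (e 0) = f 0 := hTv 0
  have hT1 : T (e 1) = f 1 + (p - q) • f 2 := hTv 1
  have hT2 : T (e 2) = f 2 := hTv 2
  have hT3 : T (e 3) = f 3 := hTv 3
  have hT4 : T (e 4) = f 4 := hTv 4
  have hT'0 : T' (f 0) = e 0 := hT'v 0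
  have hT'1 : T' (f 1) = e 1 + (q - p) • e 2 := hT'v 1
  have hT'2 : T' (f 2) = e 2 := hT'v 2
  have hT'3 : T' (f 3) = e 3 := hT'v 3
  have hT'4 : T' (f 4) = e 4 := hT'v 4
  have hTT' : T.comp T' = LinearMap.id := by
    apply f.ext; intro i
    fin_cases i <;>
      simp [hT'v, map_add, map_smul, hTv] <;> module
  have hT'T : T'.comp T = LinearMap.id := by
    apply e.ext; intro i
    fin_cases i <;>
      simp [hTv, map_add, map_smul, hT'v] <;> module
  have c01 : T ⁅e 0, e 1⁆ = ⁅T (e 0), T (e 1)⁆ := by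
    simp only [he01, map_add, map_smul, map_neg, map_zero, hT0, hT1, hT2, hT3, hT4,
      add_lie, lie_add, smul_lie, lie_smul, neg_lie, lie_neg, lie_self,
      hf01, hf02, hf03, hf04, hf12, hf13, hf14, hf23, hf24, hf34,
      smul_zero, zero_add, add_zero, neg_smul, smul_add, smul_smul, neg_zero, zero_lie,
      lie_zero, neg_neg] <;> module
  have c02 : T ⁅e 0, e 2⁆ = ⁅T (e 0), T (e 2)⁆ := by
    simp only [he02, map_add, map_smul, map_neg, map_zero, hT0, hT1, hT2, hT3, hT4,
      add_lie, lie_add, smul_lie, lie_smul, neg_lie, lie_neg, lie_self,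
      hf01, hf02, hf03, hf04, hf12, hf13, hf14, hf23, hf24, hf34,
      smul_zero, zero_add, add_zero, neg_smul, smul_add, smul_smul, neg_zero, zero_lie,
      lie_zero, neg_neg] <;> module
  have c03 : T ⁅e 0, e 3⁆ = ⁅T (e 0), T (e 3)⁆ := by
    simp only [he03, map_add, map_smul, map_neg, map_zero, hT0, hT1, hT2, hT3, hT4,
      add_lie, lie_add, smul_lie, lie_smul, neg_lie, lie_neg, lie_self,
      hf01, hf02, hf03, hf04, hf12, hf13, hf14, hf23, hf24, hf34,
      smul_zero, zero_add, add_zero, neg_smul, smul_add, smul_smul, neg_zero, zero_lie,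
      lie_zero, neg_neg] <;> module
  have c04 : T ⁅e 0, e 4⁆ = ⁅T (e 0), T (e 4)⁆ := by
    simp only [he04, map_add, map_smul, map_neg, map_zero, hT0, hT1, hT2, hT3, hT4,
      add_lie, lie_add, smul_lie, lie_smul, neg_lie, lie_neg, lie_self,
      hf01, hf02, hf03, hf04, hf12, hf13, hf14, hf23, hf24, hf34,
      smul_zero, zero_add, add_zero, neg_smul, smul_add, smul_smul, neg_zero, zero_lie,
      lie_zero, neg_neg] <;> module
  have c12 : T ⁅e 1, e 2⁆ = ⁅T (e 1), T (e 2)⁆ := by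
    simp only [he12, map_add, map_smul, map_neg, map_zero, hT0, hT1, hT2, hT3, hT4,
      add_lie, lie_add, smul_lie, lie_smul, neg_lie, lie_neg, lie_self,
      hf01, hf02, hf03, hf04, hf12, hf13, hf14, hf23, hf24, hf34,
      smul_zero, zero_add, add_zero, neg_smul, smul_add, smul_smul, neg_zero, zero_lie,
      lie_zero, neg_neg] <;> module
  have c13 : T ⁅e 1, e 3⁆ = ⁅T (e 1), T (e 3)⁆ := by
    simp only [he13, map_add, map_smul, map_neg, map_zero, hT0, hT1, hT2, hT3, hT4,
      add_lie, lie_add, smul_lie, lie_smul, neg_lie, lie_neg, lie_self,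
      hf01, hf02, hf03, hf04, hf12, hf13, hf14, hf23, hf24, hf34,
      smul_zero, zero_add, add_zero, neg_smul, smul_add, smul_smul, neg_zero, zero_lie,
      lie_zero, neg_neg] <;> module
  have c14 : T ⁅e 1, e 4⁆ = ⁅T (e 1), T (e 4)⁆ := by
    simp only [he14, map_add, map_smul, map_neg, map_zero, hT0, hT1, hT2, hT3, hT4,
      add_lie, lie_add, smul_lie, lie_smul, neg_lie, lie_neg, lie_self,
      hf01, hf02, hf03, hf04, hf12, hf13, hf14, hf23, hf24, hf34,
      smul_zero, zero_add, add_zero, neg_smul, smul_add, smul_smul, neg_zero, zero_lie,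
      lie_zero, neg_neg] <;> module
  have c23 : T ⁅e 2, e 3⁆ = ⁅T (e 2), T (e 3)⁆ := by
    simp only [he23, map_add, map_smul, map_neg, map_zero, hT0, hT1, hT2, hT3, hT4,
      add_lie, lie_add, smul_lie, lie_smul, neg_lie, lie_neg, lie_self,
      hf01, hf02, hf03, hf04, hf12, hf13, hf14, hf23, hf24, hf34,
      smul_zero, zero_add, add_zero, neg_smul, smul_add, smul_smul, neg_zero, zero_lie,
      lie_zero, neg_neg] <;> module
  have c24 : T ⁅e 2, e 4⁆ = ⁅T (e 2), T (e 4)⁆ := by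
    simp only [he24, map_add, map_smul, map_neg, map_zero, hT0, hT1, hT2, hT3, hT4,
      add_lie, lie_add, smul_lie, lie_smul, neg_lie, lie_neg, lie_self,
      hf01, hf02, hf03, hf04, hf12, hf13, hf14, hf23, hf24, hf34,
      smul_zero, zero_add, add_zero, neg_smul, smul_add, smul_smul, neg_zero, zero_lie,
      lie_zero, neg_neg] <;> module
  have c34 : T ⁅e 3, e 4⁆ = ⁅T (e 3), T (e 4)⁆ := by
    simp only [he34, map_add, map_smul, map_neg, map_zero, hT0, hT1, hT2, hT3, hT4,
      add_lie, lie_add, smul_lie, lie_smul, neg_lie, lie_neg, lie_self,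
      hf01, hf02, hf03, hf04, hf12, hf13, hf14, hf23, hf24, hf34,
      smul_zero, zero_add, add_zero, neg_smul, smul_add, smul_smul, neg_zero, zero_lie,
      lie_zero, neg_neg] <;> module
  have skew : ∀ a b : Fin 5, T ⁅e a, e b⁆ = ⁅T (e a), T (e b)⁆ →
      T ⁅e b, e a⁆ = ⁅T (e b), T (e a)⁆ := by
    intro a b h
    rw [← lie_skew (e b) (e a), ← lie_skew (T (e b)) (T (e a)), map_neg, ← h]
  have zero_case : ∀ a : Fin 5, T ⁅e a, e a⁆ = ⁅T (e a), T (e a)⁆ := by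
    intro a; simp only [lie_self, map_zero]
  have key : ∀ i j : Fin 5, T ⁅e i, e j⁆ = ⁅T (e i), T (e j)⁆ := by
    intro i j
    fin_cases i <;> fin_cases j <;>
      first
      | exact zero_case _
      | exact c01
      | exact skew _ _ c01
      | exact c02
      | exact skew _ _ c02
      | exact c03
      | exact skew _ _ c03
      | exact c04
      | exact skew _ _ c04
      | exact c12
      | exact skew _ _ c12
      | exact c13
      | exact skew _ _ c13
      | exact c14
      | exact skew _ _ c14
      | exact c23
      | exact skew _ _ c23
      | exact c24
      | exact skew _ _ c24
      | exact c34
      | exact skew _ _ c34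

  have ls : ∀ (x : L) (g : Fin 5 → L), ⁅x, ∑ i, g i⁆ = ∑ i, ⁅x, g i⁆ := by
    intro x g
    simpa only [LieAlgebra.ad_apply] using map_sum (LieAlgebra.ad ℂ L x) g Finset.univ
  have sl : ∀ (g : Fin 5 → L) (y : L), ⁅∑ i, g i, y⁆ = ∑ i, ⁅g i, y⁆ := by
    intro g y
    rw [← lie_skew, ls y g, ← Finset.sum_neg_distrib]
    exact Finset.sum_congr rfl fun i _ => lie_skew _ _
  have ls' : ∀ (x : L') (g : Fin 5 → L'), ⁅x, ∑ i, g i⁆ = ∑ i, ⁅x, g i⁆ := by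
    intro x g
    simpa only [LieAlgebra.ad_apply] using map_sum (LieAlgebra.ad ℂ L' x) g Finset.univ
  have sl' : ∀ (g : Fin 5 → L') (y : L'), ⁅∑ i, g i, y⁆ = ∑ i, ⁅g i, y⁆ := by
    intro g y
    rw [← lie_skew, ls' y g, ← Finset.sum_neg_distrib]
    exact Finset.sum_congr rfl fun i _ => lie_skew _ _
  have main : ∀ x y : L, T ⁅x, y⁆ = ⁅T x, T y⁆ := by
    intro x y
    conv_lhs => rw [← e.sum_repr x, ← e.sum_repr y]
    conv_rhs => rw [← e.sum_repr x, ← e.sum_repr y]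
    rw [sl]
    simp only [ls, smul_lie, lie_smul, map_sum, map_smul, key]
    rw [sl']
    simp only [ls', smul_lie, lie_smul, map_sum, map_smul]
  exact ⟨{ toFun := T, map_add' := T.map_add, map_smul' := T.map_smul, map_lie' := main _ _,
           invFun := T', left_inv := fun x => LinearMap.congr_fun hT'T x,
           right_inv := fun x => LinearMap.congr_fun hTT' x }⟩
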